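/- Take 𝒢 = ℤ and let c, m be positive integers. The number of k-skeletal area vectors (equivalently, k-skeletal paths) equals the m-ballot number c/((m+1)n + c) · binom((m+1)n + c, n), for every k ∈ {0, 1, …, n−1}. -/

import Mathlib

/-- Integer area vector. -/
def IsAreaVecZ {n : ℕ} (m : ℤ) (g : Fin (n + 1) → ℤ) : Prop :=
  ∀ i : Fin n, g i.succ ≤ g i.castSucc + m

/-- Integer `k`-skeletal area vector. -/
def IsSkeletalZ {n : ℕ} (c m : ℤ) (k : ℕ) (g : Fin (n + 1) → ℤ) : Prop :=
  IsAreaVecZ m g ∧ g 0 ≤ c ∧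
  (∀ i : Fin (n + 1), n - k ≤ (i : ℕ) → 0 < g i) ∧
  ¬ ∃ s : ℕ, s + k ≤ n ∧ ∀ j : Fin (n + 1), s ≤ (j : ℕ) → (j : ℕ) ≤ s + k → c < g j

namespace Stmt9

variable {n c m k : ℕ}

/-- quasi-periodic extension of `g : Fin (n+1) → ℤ` : `G (j + (n+1)) = G j - c`. -/
def extZ (n c : ℕ) (g : Fin (n+1) → ℤ) : ℤ → ℤ :=
  fun j => g ⟨(j % (n+1)).toNat, by
    have h1 : 0 ≤ j % (n+1) := Int.emod_nonneg j (by positivity)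
    have h2 : j % (n+1) < (n+1 : ℤ) := Int.emod_lt_of_pos j (by positivity)
    omega⟩ - c * (j / (n+1))

lemma extZ_mem (g : Fin (n+1) → ℤ) (j : ℤ) (h0 : 0 ≤ j) (h1 : j < (n:ℤ)+1) :
    extZ n c g j = g ⟨j.toNat, by omega⟩ := by
  have e1 : j % ((n:ℤ)+1) = j := Int.emod_eq_of_lt h0 h1
  have e2 : j / ((n:ℤ)+1) = 0 := Int.ediv_eq_zero_of_lt h0 h1
  unfold extZ
  have hfin : (⟨((j % ((n:ℤ)+1))).toNat, by
      have := Int.emod_nonneg j (show ((n:ℤ)+1) ≠ 0 by positivity)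
      have := Int.emod_lt_of_pos j (show (0:ℤ) < (n:ℤ)+1 by positivity)
      omega⟩ : Fin (n+1)) = ⟨j.toNat, by omega⟩ := by
    apply Fin.ext
    simp only [Fin.val_mk]
    omega
  rw [hfin, e2, mul_zero, sub_zero]

lemma extZ_coe (g : Fin (n+1) → ℤ) (i : Fin (n+1)) : extZ n c g (i : ℤ) = g i := by
  rw [extZ_mem g _ (by positivity) (by exact_mod_cast i.2)]
  congr 1

lemma extZ_period (g : Fin (n+1) → ℤ) (j : ℤ) :
    extZ n c g (j + (n+1)) = extZ n c g j - c := by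
  have h1 : (j + ((n:ℤ)+1)) % ((n:ℤ)+1) = j % ((n:ℤ)+1) := by
    simpa using Int.add_mul_emod_self_left (a := j) (b := (n:ℤ)+1) (c := 1)
  have h2 : (j + ((n:ℤ)+1)) / ((n:ℤ)+1) = j / ((n:ℤ)+1) + 1 := by
    rw [Int.add_ediv_of_dvd_right ⟨1, by ring⟩]
    simp [Int.ediv_self, (by positivity : ((n:ℤ)+1) ≠ 0)]
  unfold extZ
  have hfin : (⟨(((j + ((n:ℤ)+1)) % ((n:ℤ)+1))).toNat, by
      have := Int.emod_nonneg (j + ((n:ℤ)+1)) (show ((n:ℤ)+1) ≠ 0 by positivity)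
      have := Int.emod_lt_of_pos (j + ((n:ℤ)+1)) (show (0:ℤ) < (n:ℤ)+1 by positivity)
      omega⟩ : Fin (n+1)) = ⟨((j % ((n:ℤ)+1))).toNat, by
      have := Int.emod_nonneg j (show ((n:ℤ)+1) ≠ 0 by positivity)
      have := Int.emod_lt_of_pos j (show (0:ℤ) < (n:ℤ)+1 by positivity)
      omega⟩ := by
    apply Fin.ext
    simp only [Fin.val_mk]
    omega
  push_cast at hfin h2 ⊢
  rw [hfin, h2]
  ring



section Chunk2
variable {g : Fin (n+1) → ℤ}

lemma periodic_mul {G : ℤ → ℤ} (hper : ∀ j, G (j + (n+1)) = G j - c) (t j : ℤ) :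
    G (j + t*((n:ℤ)+1)) = G j - t*c := by
  induction t using Int.induction_on with
  | zero => simp
  | succ i ih =>
      have e : j + ((i:ℤ)+1)*((n:ℤ)+1) = (j + i*((n:ℤ)+1)) + ((n:ℤ)+1) := by ring
      rw [e]
      have := hper (j + i*((n:ℤ)+1))
      push_cast at this ⊢
      rw [this, ih]; ring
  | pred i ih =>
      have e : (j + (-(i:ℤ)-1)*((n:ℤ)+1)) + ((n:ℤ)+1) = j + (-(i:ℤ))*((n:ℤ)+1) := by ring
      have h2 := hper (j + (-(i:ℤ)-1)*((n:ℤ)+1))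
      rw [e] at h2
      push_cast at h2 ih ⊢
      -- h2 : G (j + -i*(n+1)) = G (j + (-i-1)*(n+1)) - c
      have : G (j + (-(i:ℤ)-1)*((n:ℤ)+1)) = G (j + (-(i:ℤ))*((n:ℤ)+1)) + c := by omega
      rw [this, ih]; ring

lemma ext_unique {G' : ℤ → ℤ} (hper : ∀ j, G' (j + (n+1)) = G' j - c)
    (hagree : ∀ i : Fin (n+1), G' (i : ℤ) = g i) (j : ℤ) : G' j = extZ n c g j := by
  have hNpos : (0:ℤ) < (n:ℤ)+1 := by positivity
  set r := j % ((n:ℤ)+1) with hr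
  set t := j / ((n:ℤ)+1) with ht
  have hj : j = r + t*((n:ℤ)+1) := by
    rw [hr, ht]; rw [Int.emod_add_ediv_mul] 
  have hr0 : 0 ≤ r := Int.emod_nonneg j (by positivity)
  have hr1 : r < (n:ℤ)+1 := Int.emod_lt_of_pos j hNpos
  have hext : ∀ j', extZ n c g (j' + ((n:ℕ)+1:ℤ)) = extZ n c g j' - c := fun j' => extZ_period g j'
  have hper2 : ∀ j', extZ n c g (j' + ((n:ℤ)+1)) = extZ n c g j' - c := by
    intro j'; have := hext j'; push_cast at this; exact this
  rw [hj, periodic_mul hper, periodic_mul hper2]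
  have : G' r = extZ n c g r := by
    rw [extZ_mem g r hr0 hr1]
    have := hagree ⟨r.toNat, by omega⟩
    rw [← this]
    congr 1
    simp only [Fin.val_mk]
    omega
  rw [this]

lemma extZ_step (hg : IsAreaVecZ (m:ℤ) g) (hb : g 0 ≤ g (Fin.last n) + m + c) (j : ℤ) :
    extZ n c g (j+1) ≤ extZ n c g j + m := by
  have hNpos : (0:ℤ) < (n:ℤ)+1 := by positivity
  have hper2 : ∀ j', extZ n c g (j' + ((n:ℤ)+1)) = extZ n c g j' - c := by
    intro j'; have := extZ_period (c := c) g j'; push_cast at this; exact this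
  set r := j % ((n:ℤ)+1) with hrdef
  set t := j / ((n:ℤ)+1) with ht
  have hj : j = r + t*((n:ℤ)+1) := by rw [hrdef, ht]; rw [Int.emod_add_ediv_mul]
  have hr0 : 0 ≤ r := Int.emod_nonneg j (by positivity)
  have hr1 : r < (n:ℤ)+1 := Int.emod_lt_of_pos j hNpos
  have hj1 : j + 1 = (r+1) + t*((n:ℤ)+1) := by omega
  rw [hj1, hj, periodic_mul hper2, periodic_mul hper2]
  have key : extZ n c g (r+1) ≤ extZ n c g r + m := by
    rcases lt_or_eq_of_le (show r ≤ (n:ℤ) by omega) with h | h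
    · rw [extZ_mem g r hr0 hr1, extZ_mem g (r+1) (by omega) (by omega)]
      have := hg ⟨r.toNat, by omega⟩
      have e1 : (⟨r.toNat, by omega⟩ : Fin n).succ = (⟨(r+1).toNat, by omega⟩ : Fin (n+1)) := by
        apply Fin.ext; simp [Fin.val_succ]; omega
      have e2 : (⟨r.toNat, by omega⟩ : Fin n).castSucc = (⟨r.toNat, by omega⟩ : Fin (n+1)) := by
        apply Fin.ext; simp
      rw [e1, e2] at this
      exact this
    · have e0 : r + 1 = 0 + ((n:ℤ)+1) := by omega
      rw [e0, hper2 0]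
      have ez : extZ n c g 0 = g 0 := by
        rw [extZ_mem g 0 le_rfl hNpos]
        congr 1
      have en : extZ n c g r = g (Fin.last n) := by
        rw [extZ_mem g r hr0 hr1]
        congr 1
        apply Fin.ext; simp [Fin.last]; omega
      rw [ez, en]
      omega
  omega

end Chunk2

section Chunk3

/-- the cut of the infinite path at shift `p`, level `v`. -/
def cutv (n : ℕ) (G : ℤ → ℤ) (p v : ℤ) : Fin (n+1) → ℤ := fun i => G ((i:ℤ) + p) - v

/-- goodness of a cut, expressed via the extended path. -/
def GoodSk (n c k : ℕ) (G : ℤ → ℤ) (p v : ℤ) : Prop :=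
  G p ≤ v + c ∧
  (∀ i : ℤ, (n:ℤ) - k ≤ i → i ≤ n → v + 1 ≤ G (p + i)) ∧
  (∀ s : ℤ, 0 ≤ s → s ≤ (n:ℤ) - k → ∃ i : ℤ, s ≤ i ∧ i ≤ s + k ∧ G (p + i) ≤ v + c)

variable {G : ℤ → ℤ} {p v : ℤ}

lemma cut_areaVec (hstep : ∀ j, G (j+1) ≤ G j + m) : IsAreaVecZ (m:ℤ) (cutv n G p v) := by
  intro i
  simp only [cutv, Fin.coe_castSucc, Fin.val_succ]
  have h := hstep ((i:ℤ) + p)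
  have e : (((i:ℕ) + 1 : ℕ) : ℤ) + p = ((i:ℕ):ℤ) + p + 1 := by push_cast; ring
  rw [e]
  linarith

lemma cut_skeletal_iff (hk : k ≤ n) (hstep : ∀ j, G (j+1) ≤ G j + m) :
    IsSkeletalZ (c:ℤ) (m:ℤ) k (cutv n G p v) ↔ GoodSk n c k G p v := by
  unfold IsSkeletalZ GoodSk
  have harea : IsAreaVecZ (m:ℤ) (cutv n G p v) := cut_areaVec hstep
  have hzero : ((0 : Fin (n+1)) : ℤ) = 0 := by simp
  constructor
  · rintro ⟨-, h0, hpos, hwin⟩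
    refine ⟨?_, ?_, ?_⟩
    · simp only [cutv, hzero, zero_add] at h0; linarith
    · intro i hi1 hi2
      have hi0 : 0 ≤ i := by omega
      have := hpos ⟨i.toNat, by omega⟩ (by simp only [Fin.val_mk]; omega)
      simp only [cutv, Fin.val_mk] at this
      have e : ((i.toNat : ℕ) : ℤ) + p = p + i := by omega
      rw [e] at this
      linarith
    · intro s hs0 hs1
      by_contra hcon
      push_neg at hcon
      apply hwin
      refine ⟨s.toNat, by omega, ?_⟩
      intro j hj1 hj2
      have hcj := hcon (j:ℤ) (by omega) (by omega)
      simp only [cutv]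
      have e : ((j:ℕ) : ℤ) + p = p + (j:ℤ) := by ring
      rw [e]
      linarith
  · rintro ⟨h0, hpos, hwin⟩
    refine ⟨harea, ?_, ?_, ?_⟩
    · simp only [cutv, hzero, zero_add]; linarith
    · intro i hi
      have hin : (i:ℕ) ≤ n := by omega
      have := hpos (i:ℤ) (by omega) (by exact_mod_cast hin)
      simp only [cutv]
      have e : ((i:ℕ) : ℤ) + p = p + (i:ℤ) := by ring
      rw [e]
      linarith
    · rintro ⟨s, hsk, hall⟩
      obtain ⟨i, hi1, hi2, hi3⟩ := hwin (s:ℤ) (by positivity) (by omega)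
      have hi0 : 0 ≤ i := by omega
      have := hall ⟨i.toNat, by omega⟩ (by simp only [Fin.val_mk]; omega)
        (by simp only [Fin.val_mk]; omega)
      simp only [cutv, Fin.val_mk] at this
      have e : ((i.toNat : ℕ) : ℤ) + p = p + i := by omega
      rw [e] at this
      linarith

end Chunk3
section Chunk4

variable {G : ℤ → ℤ} {p p' v : ℤ}

lemma good_shift (hper : ∀ j, G (j + ((n:ℤ)+1)) = G j - c) (t : ℤ)
    (h : GoodSk n c k G p v) : GoodSk n c k G (p + t*((n:ℤ)+1)) (v - t*c) := by
  obtain ⟨h1, h2, h3⟩ := h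
  have hperm := periodic_mul (c := c) hper
  refine ⟨?_, ?_, ?_⟩
  · rw [hperm]; omega
  · intro i hi1 hi2
    have e : p + t*((n:ℤ)+1) + i = (p + i) + t*((n:ℤ)+1) := by ring
    rw [e, hperm]
    have := h2 i hi1 hi2
    omega
  · intro s hs1 hs2
    obtain ⟨i, hi1, hi2, hi3⟩ := h3 s hs1 hs2
    refine ⟨i, hi1, hi2, ?_⟩
    have e : p + t*((n:ℤ)+1) + i = (p + i) + t*((n:ℤ)+1) := by ring
    rw [e, hperm]
    omega

lemma good_unique_aux (hc : 0 < c) (hk : k ≤ n)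
    (hper : ∀ j, G (j + ((n:ℤ)+1)) = G j - c)
    (h : GoodSk n c k G p v) (h' : GoodSk n c k G p' v) (hlt : p < p') : False := by
  set N : ℤ := (n:ℤ)+1 with hN
  have hperm := periodic_mul (c := c) hper
  obtain ⟨h1, h2, h3⟩ := h
  obtain ⟨h1', h2', h3'⟩ := h'
  rcases le_or_gt p' (p + k + 1) with hc1 | hc1
  · -- case 1
    have hpN : G (p + N) = G p - c := hper p
    have hi := h2' (p + N - p') (by omega) (by omega)
    have e : p' + (p + N - p') = p + N := by ring
    rw [e] at hi
    omega
  rcases le_or_gt p' (p + N) with hc2 | hc2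
  · -- case 2
    obtain ⟨i, hi1, hi2, hi3⟩ := h3 (p' - k - 1 - p) (by omega) (by omega)
    have hi' := h2' (p + i + N - p') (by omega) (by omega)
    have e : p' + (p + i + N - p') = (p + i) + N := by ring
    rw [e, hper] at hi'
    omega
  · -- case 3 : p' ≥ p + N + 1
    have hNpos : (0:ℤ) < (n:ℤ)+1 := by positivity
    set a : ℤ := p' + n - k with ha
    have ht1 : 1 ≤ (a - p) / ((n:ℤ)+1) := by
      have h11 : ((n:ℤ)+1) / ((n:ℤ)+1) ≤ (a - p) / ((n:ℤ)+1) :=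
        Int.ediv_le_ediv hNpos (by omega)
      rwa [Int.ediv_self (by omega)] at h11
    set t : ℤ := (a - p) / ((n:ℤ)+1) with ht
    set r : ℤ := (a - p) % ((n:ℤ)+1) with hr
    have hdm : ((n:ℤ)+1) * t + r = a - p := Int.mul_ediv_add_emod _ _
    have hr0 : 0 ≤ r := Int.emod_nonneg _ (by omega)
    have hr1 : r < (n:ℤ)+1 := Int.emod_lt_of_pos _ hNpos
    have htc : (c:ℤ) ≤ t * c := le_mul_of_one_le_left (by positivity) ht1
    rcases le_or_gt ((n:ℤ)+1) (r + k) with hs | hs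
    · -- straddle
      have e2 : (t+1)*((n:ℤ)+1) = ((n:ℤ)+1)*t + ((n:ℤ)+1) := by ring
      have e3 : (t+1)*(c:ℤ) = t*c + c := by ring
      have hi := h2' ((n:ℤ) - k - r + ((n:ℤ)+1)) (by omega) (by omega)
      have e : p' + ((n:ℤ) - k - r + ((n:ℤ)+1)) = p + (t+1)*((n:ℤ)+1) := by omega
      rw [e, hperm (t+1) p] at hi
      omega
    · -- inside a tile
      have e2 : t*((n:ℤ)+1) = ((n:ℤ)+1)*t := by ring
      obtain ⟨i, hi1, hi2, hi3⟩ := h3 r (by omega) (by omega)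
      have hi' := h2' (i - r + n - k) (by omega) (by omega)
      have e : p' + (i - r + (n:ℤ) - k) = (p + i) + t*((n:ℤ)+1) := by omega
      rw [e, hperm t (p+i)] at hi'
      omega

end Chunk4

section Chunk5

variable {G : ℤ → ℤ}

lemma val_formula (hper : ∀ j, G (j + ((n:ℤ)+1)) = G j - c) (j : ℤ) :
    G j = G (j % ((n:ℤ)+1)) - (j / ((n:ℤ)+1)) * c := by
  have hperm := periodic_mul (c := c) hper
  conv_lhs => rw [show j = j % ((n:ℤ)+1) + (j / ((n:ℤ)+1)) * ((n:ℤ)+1) from by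
    rw [Int.emod_add_ediv_mul]]
  rw [hperm]

/-- far to the left, `G` exceeds any bound -/
lemma far_left (hc : 0 < c) (hper : ∀ j, G (j + ((n:ℤ)+1)) = G j - c) (w : ℤ) :
    ∃ j0 : ℤ, ∀ j, j ≤ j0 → w < G j := by
  have hNpos : (0:ℤ) < (n:ℤ)+1 := by positivity
  obtain ⟨A, hA⟩ : ∃ A : ℤ, ∀ x : ℤ, 0 ≤ x → x ≤ n → A ≤ G x := by
    refine ⟨(Finset.Icc (0:ℤ) (n:ℤ)).inf' ⟨0, by simp⟩ G, fun x h1 h2 => ?_⟩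
    exact Finset.inf'_le G (by simp [Finset.mem_Icc]; omega)
  set B : ℤ := max 0 (w + 1 - A) with hB
  refine ⟨-(((n:ℤ)+1) * B), fun j hj => ?_⟩
  have hdiv : j / ((n:ℤ)+1) ≤ -B := by
    have e : ((n:ℤ)+1) * (-B) = -(((n:ℤ)+1) * B) := by ring
    have h1 : j / ((n:ℤ)+1) ≤ (((n:ℤ)+1) * (-B)) / ((n:ℤ)+1) :=
      Int.ediv_le_ediv hNpos (by omega)
    rwa [Int.mul_ediv_cancel_left _ (by omega)] at h1
  have hval := val_formula (c := c) hper j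
  have hmod0 : 0 ≤ j % ((n:ℤ)+1) := Int.emod_nonneg _ (by omega)
  have hmod1 : j % ((n:ℤ)+1) < (n:ℤ)+1 := Int.emod_lt_of_pos _ hNpos
  have hAx := hA _ hmod0 (by omega)
  have hBc : B ≤ B * c := le_mul_of_one_le_right (by omega) (by exact_mod_cast hc)
  have key : B * (c:ℤ) ≤ (-(j / ((n:ℤ)+1))) * c :=
    mul_le_mul_of_nonneg_right (by omega) (by positivity)
  have e : (-(j / ((n:ℤ)+1))) * (c:ℤ) = -((j / ((n:ℤ)+1)) * c) := by ring
  omega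

/-- far to the right, `G` is below any bound -/
lemma far_right (hc : 0 < c) (hper : ∀ j, G (j + ((n:ℤ)+1)) = G j - c) (w : ℤ) :
    ∃ j1 : ℤ, ∀ j, j1 ≤ j → G j ≤ w := by
  have hNpos : (0:ℤ) < (n:ℤ)+1 := by positivity
  obtain ⟨A, hA⟩ : ∃ A : ℤ, ∀ x : ℤ, 0 ≤ x → x ≤ n → G x ≤ A := by
    refine ⟨(Finset.Icc (0:ℤ) (n:ℤ)).sup' ⟨0, by simp⟩ G, fun x h1 h2 => ?_⟩
    exact Finset.le_sup' G (by simp [Finset.mem_Icc]; omega)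
  set B : ℤ := max 0 (A - w) with hB
  refine ⟨((n:ℤ)+1) * B, fun j hj => ?_⟩
  have hdiv : B ≤ j / ((n:ℤ)+1) := by
    have h1 : (((n:ℤ)+1) * B) / ((n:ℤ)+1) ≤ j / ((n:ℤ)+1) := Int.ediv_le_ediv hNpos hj
    rwa [Int.mul_ediv_cancel_left _ (by omega)] at h1
  have hval := val_formula (c := c) hper j
  have hmod0 : 0 ≤ j % ((n:ℤ)+1) := Int.emod_nonneg _ (by omega)
  have hmod1 : j % ((n:ℤ)+1) < (n:ℤ)+1 := Int.emod_lt_of_pos _ hNpos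
  have hAx := hA _ hmod0 (by omega)
  have hBc : B ≤ B * c := le_mul_of_one_le_right (by omega) (by exact_mod_cast hc)
  have key : B * (c:ℤ) ≤ (j / ((n:ℤ)+1)) * c :=
    mul_le_mul_of_nonneg_right hdiv (by positivity)
  omega

lemma good_exists (hc : 0 < c) (hk : k ≤ n)
    (hper : ∀ j, G (j + ((n:ℤ)+1)) = G j - c) (v : ℤ) :
    ∃ p : ℤ, GoodSk n c k G p v := by
  obtain ⟨j0, hj0⟩ := far_left (n := n) hc hper (v + c)
  obtain ⟨j1, hj1⟩ := far_right (n := n) hc hper v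
  -- the set {j | G j ≤ v} has a least element q*
  obtain ⟨q, hqmem, hqleast⟩ := Int.exists_least_of_bdd
    (P := fun j => G j ≤ v)
    ⟨j0 + 1, fun z hz => by by_contra hcon; push_neg at hcon; have := hj0 z (by omega); omega⟩
    ⟨j1, hj1 j1 le_rfl⟩
  by_cases hR : ∃ j : ℤ, ∀ i : ℤ, 0 ≤ i → i ≤ (k:ℤ) → v + c + 1 ≤ G (j + i)
  · -- R nonempty : take greatest j*, use p = j* + k + 1
    obtain ⟨js, hjsmem, hjsgr⟩ := Int.exists_greatest_of_bdd
      (P := fun j => ∀ i : ℤ, 0 ≤ i → i ≤ (k:ℤ) → v + c + 1 ≤ G (j + i))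
      ⟨j1, fun z hz => by
        by_contra hcon
        have h1 := hz 0 le_rfl (by positivity)
        have h2 := hj1 z (by omega)
        simp only [add_zero] at h1
        omega⟩
      hR
    refine ⟨js + k + 1, ?_, ?_, ?_⟩
    · -- G (js + k + 1) ≤ v + c
      have hnot : ¬ (∀ i : ℤ, 0 ≤ i → i ≤ (k:ℤ) → v + c + 1 ≤ G (js + 1 + i)) := by
        intro hcon
        have := hjsgr (js + 1) hcon
        omega
      push_neg at hnot
      obtain ⟨i, hi0, hik, hiG⟩ := hnot
      rcases lt_or_eq_of_le hik with hik' | hik'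
      · exfalso
        have := hjsmem (1 + i) (by omega) (by omega)
        have e : js + (1 + i) = js + 1 + i := by ring
        rw [e] at this
        omega
      · have e : js + 1 + i = js + k + 1 := by omega
        rw [e] at hiG
        omega
    · -- positivity
      intro i hi1 hi2
      have hx := hjsmem (k + 1 + i - ((n:ℤ)+1)) (by omega) (by omega)
      have e : js + (k + 1 + i - ((n:ℤ)+1)) + ((n:ℤ)+1) = js + k + 1 + i := by ring
      have := hper (js + (k + 1 + i - ((n:ℤ)+1)))
      rw [e] at this
      omega
    · -- window condition
      intro s hs0 hs1
      have hnot : ¬ (∀ i : ℤ, 0 ≤ i → i ≤ (k:ℤ) → v + c + 1 ≤ G (js + k + 1 + s + i)) := by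
        intro hcon
        have := hjsgr (js + k + 1 + s) hcon
        omega
      push_neg at hnot
      obtain ⟨i, hi0, hik, hiG⟩ := hnot
      refine ⟨s + i, by omega, by omega, ?_⟩
      have e : js + k + 1 + (s + i) = js + k + 1 + s + i := by ring
      rw [e]
      omega
  · -- R empty : use p = q - (n+1)
    push_neg at hR
    refine ⟨q - ((n:ℤ)+1), ?_, ?_, ?_⟩
    · have := hper (q - ((n:ℤ)+1))
      have e : q - ((n:ℤ)+1) + ((n:ℤ)+1) = q := by ring
      rw [e] at this
      omega
    · intro i hi1 hi2
      have hlt : q - ((n:ℤ)+1) + i < q := by omega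
      by_contra hcon
      have := hqleast (q - ((n:ℤ)+1) + i) (by omega)
      omega
    · intro s hs0 hs1
      obtain ⟨i, hi0, hik, hiG⟩ := hR (q - ((n:ℤ)+1) + s)
      refine ⟨s + i, by omega, by omega, ?_⟩
      have e : q - ((n:ℤ)+1) + (s + i) = q - ((n:ℤ)+1) + s + i := by ring
      rw [e]
      omega

end Chunk5

section Chunk6

variable {G : ℤ → ℤ}

lemma good_unique (hc : 0 < c) (hk : k ≤ n)
    (hper : ∀ j, G (j + ((n:ℤ)+1)) = G j - c) {p p' v : ℤ}
    (h : GoodSk n c k G p v) (h' : GoodSk n c k G p' v) : p = p' := by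
  rcases lt_trichotomy p p' with hlt | heq | hlt
  · exact absurd (good_unique_aux hc hk hper h h' hlt) (by simp)
  · exact heq
  · exact absurd (good_unique_aux hc hk hper h' h hlt) (by simp)

lemma good_inj (hc : 0 < c) (hk : k ≤ n)
    (hper : ∀ j, G (j + ((n:ℤ)+1)) = G j - c) :
    Set.InjOn (fun q : ℤ × ℤ => q.2 % c)
      {q : ℤ × ℤ | 0 ≤ q.1 ∧ q.1 < (n:ℤ)+1 ∧ GoodSk n c k G q.1 q.2} := by
    rintro ⟨p1, v1⟩ ⟨h10, h11, hg1⟩ ⟨p2, v2⟩ ⟨h20, h21, hg2⟩ hmod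
    simp only at hmod
    have hdvd : (c:ℤ) ∣ v2 - v1 := by
      rw [Int.dvd_iff_emod_eq_zero, ← Int.emod_eq_emod_iff_emod_sub_eq_zero]
      omega
    obtain ⟨t, ht⟩ := hdvd
    have hv1 : v2 - t * c = v1 := by
      have e0 : (c:ℤ) * t = t * c := mul_comm _ _
      omega
    have hshift := good_shift (p := p2) (v := v2) hper t hg2
    rw [hv1] at hshift
    have hpp : p1 = p2 + t * ((n:ℤ)+1) := good_unique hc hk hper hg1 hshift
    have ht0 : t = 0 := by
      by_contra htne
      rcases lt_or_gt_of_ne htne with htn | htp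
      · have : t * ((n:ℤ)+1) ≤ -1 * ((n:ℤ)+1) :=
          mul_le_mul_of_nonneg_right (by omega) (by positivity)
        have e : (-1 : ℤ) * ((n:ℤ)+1) = -((n:ℤ)+1) := by ring
        omega
      · have : 1 * ((n:ℤ)+1) ≤ t * ((n:ℤ)+1) :=
          mul_le_mul_of_nonneg_right (by omega) (by positivity)
        have e : (1 : ℤ) * ((n:ℤ)+1) = ((n:ℤ)+1) := by ring
        omega
    rw [ht0] at ht hpp
    simp only [mul_zero, zero_mul, add_zero] at ht hpp
    have : v1 = v2 := by omega
    simp [hpp, this]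

lemma good_count (hc : 0 < c) (hk : k ≤ n)
    (hper : ∀ j, G (j + ((n:ℤ)+1)) = G j - c) :
    {q : ℤ × ℤ | 0 ≤ q.1 ∧ q.1 < (n:ℤ)+1 ∧ GoodSk n c k G q.1 q.2}.ncard = c := by
  set K := {q : ℤ × ℤ | 0 ≤ q.1 ∧ q.1 < (n:ℤ)+1 ∧ GoodSk n c k G q.1 q.2} with hK
  have hinj := good_inj hc hk hper
  have himg : (fun q : ℤ × ℤ => q.2 % c) '' K = Set.Ico 0 (c:ℤ) := by
    apply Set.Subset.antisymm
    · rintro x ⟨⟨p1, v1⟩, ⟨-, -, -⟩, rfl⟩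
      exact ⟨Int.emod_nonneg _ (by positivity), Int.emod_lt_of_pos _ (by positivity)⟩
    · rintro v0 ⟨hv0, hv1⟩
      obtain ⟨p, hp⟩ := good_exists hc hk hper v0
      have hNpos : (0:ℤ) < (n:ℤ)+1 := by positivity
      set t : ℤ := p / ((n:ℤ)+1) with htdef
      set r : ℤ := p % ((n:ℤ)+1) with hrdef
      have hr0 : 0 ≤ r := Int.emod_nonneg _ (by omega)
      have hr1 : r < (n:ℤ)+1 := Int.emod_lt_of_pos _ hNpos
      have hdm : r + t * ((n:ℤ)+1) = p := by rw [hrdef, htdef]; exact Int.emod_add_ediv_mul p _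
      have hshift := good_shift (p := p) (v := v0) hper (-t) hp
      have e1 : p + (-t) * ((n:ℤ)+1) = r := by
        have e0 : (-t) * ((n:ℤ)+1) = -(t * ((n:ℤ)+1)) := by ring
        omega
      have e2 : v0 - (-t) * (c:ℤ) = v0 + t * c := by ring
      rw [e1, e2] at hshift
      refine ⟨(r, v0 + t * c), ⟨hr0, hr1, hshift⟩, ?_⟩
      simp only
      rw [Int.add_mul_emod_self_right]
      exact Int.emod_eq_of_lt hv0 hv1
  calc K.ncard = ((fun q : ℤ × ℤ => q.2 % c) '' K).ncard := (Set.ncard_image_of_injOn hinj).symm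
    _ = (Set.Ico 0 (c:ℤ)).ncard := by rw [himg]
    _ = c := by
        rw [← Finset.coe_Ico, Set.ncard_coe_finset, Int.card_Ico]
        simp

lemma good_finite (hc : 0 < c) (hk : k ≤ n)
    (hper : ∀ j, G (j + ((n:ℤ)+1)) = G j - c) :
    {q : ℤ × ℤ | 0 ≤ q.1 ∧ q.1 < (n:ℤ)+1 ∧ GoodSk n c k G q.1 q.2}.Finite := by
  apply Set.Finite.of_finite_image _ (good_inj hc hk hper)
  apply Set.Finite.subset (Set.finite_Ico (0:ℤ) c)
  rintro x ⟨⟨p1, v1⟩, ⟨-, -, -⟩, rfl⟩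
  exact ⟨Int.emod_nonneg _ (by positivity), Int.emod_lt_of_pos _ (by positivity)⟩

end Chunk6

section Chunk7

/-- fibered finiteness -/
lemma fiber_finite {α β : Type*} (A : Finset α) (F : α → Set β)
    (hF : ∀ a ∈ A, (F a).Finite) :
    {x : α × β | x.1 ∈ A ∧ x.2 ∈ F x.1}.Finite := by
  classical
  induction A using Finset.induction with
  | empty => simp
  | @insert a A ha ih =>
      have hsplit : {x : α × β | x.1 ∈ insert a A ∧ x.2 ∈ F x.1}
          = ((fun b => (a, b)) '' F a) ∪ {x : α × β | x.1 ∈ A ∧ x.2 ∈ F x.1} := by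
        ext ⟨x1, x2⟩
        simp only [Set.mem_setOf_eq, Finset.mem_insert, Set.mem_union, Set.mem_image]
        constructor
        · rintro ⟨h1 | h1, h2⟩
          · subst h1; exact Or.inl ⟨x2, h2, rfl⟩
          · exact Or.inr ⟨h1, h2⟩
        · rintro (⟨b, hb, heq⟩ | ⟨h1, h2⟩)
          · have e1 := congrArg Prod.fst heq
            have e2 := congrArg Prod.snd heq
            simp only at e1 e2
            subst e1; subst e2
            exact ⟨Or.inl rfl, hb⟩
          · exact ⟨Or.inr h1, h2⟩
      rw [hsplit]
      exact ((hF a (by simp)).image _).union (ih fun a ha => hF a (by simp [ha]))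

/-- fibered counting -/
lemma fiber_ncard {α β : Type*} (A : Finset α) (F : α → Set β)
    (hF : ∀ a ∈ A, (F a).Finite) :
    {x : α × β | x.1 ∈ A ∧ x.2 ∈ F x.1}.ncard = ∑ a ∈ A, (F a).ncard := by
  classical
  induction A using Finset.induction with
  | empty => simp
  | @insert a A ha ih =>
      have hsplit : {x : α × β | x.1 ∈ insert a A ∧ x.2 ∈ F x.1}
          = ((fun b => (a, b)) '' F a) ∪ {x : α × β | x.1 ∈ A ∧ x.2 ∈ F x.1} := by
        ext ⟨x1, x2⟩
        simp only [Set.mem_setOf_eq, Finset.mem_insert, Set.mem_union, Set.mem_image]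
        constructor
        · rintro ⟨h1 | h1, h2⟩
          · subst h1; exact Or.inl ⟨x2, h2, rfl⟩
          · exact Or.inr ⟨h1, h2⟩
        · rintro (⟨b, hb, heq⟩ | ⟨h1, h2⟩)
          · have e1 := congrArg Prod.fst heq
            have e2 := congrArg Prod.snd heq
            simp only at e1 e2
            subst e1; subst e2
            exact ⟨Or.inl rfl, hb⟩
          · exact ⟨Or.inr h1, h2⟩
      rw [hsplit, Set.ncard_union_eq ?_ ((hF a (by simp)).image _)
        (fiber_finite A F fun a ha => hF a (by simp [ha]))]
      · rw [Set.ncard_image_of_injective _ (fun b1 b2 h => (Prod.mk.injEq .. ▸ h).2),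
          Finset.sum_insert ha, ih fun a ha => hF a (by simp [ha])]
      · rw [Set.disjoint_left]
        rintro ⟨x1, x2⟩ ⟨b, hb, heq⟩ hmem
        have e1 := congrArg Prod.fst heq
        simp only at e1
        exact ha (by simpa [← e1] using hmem.1)

end Chunk7

section Chunk8

/-- the "free cyclic" finite set `D`. -/
def DSet (n c m : ℕ) : Set (Fin (n+1) → ℤ) :=
  {g | IsAreaVecZ (m:ℤ) g ∧ g 0 ≤ (c:ℤ) ∧ -(m:ℤ) ≤ g (Fin.last n)}

def IcoZ (N : ℕ) : Finset ℤ := (Finset.range N).map ⟨Nat.cast, Nat.cast_injective⟩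

lemma mem_IcoZ {N : ℕ} {p : ℤ} : p ∈ IcoZ N ↔ 0 ≤ p ∧ p < N := by
  simp only [IcoZ, Finset.mem_map, Finset.mem_range, Function.Embedding.coeFn_mk]
  constructor
  · rintro ⟨j, hj, rfl⟩; exact ⟨by positivity, by exact_mod_cast hj⟩
  · rintro ⟨h0, h1⟩; exact ⟨p.toNat, by omega, by omega⟩

variable {G : ℤ → ℤ}

lemma cut_mem_DSet_iff (hstep : ∀ j, G (j+1) ≤ G j + m) (p v : ℤ) :
    cutv n G p v ∈ DSet n c m ↔ v ∈ Set.Icc (G p - c) (G ((n:ℤ) + p) + m) := by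
  have hzero : ((0 : Fin (n+1)) : ℤ) = 0 := by simp
  have hlast : ((Fin.last n : Fin (n+1)) : ℤ) = (n:ℤ) := by simp
  constructor
  · rintro ⟨-, h0, h1⟩
    simp only [cutv, hzero, hlast, zero_add] at h0 h1
    exact ⟨by omega, by omega⟩
  · rintro ⟨h0, h1⟩
    refine ⟨cut_areaVec hstep, ?_, ?_⟩
    · simp only [cutv, hzero, zero_add]; omega
    · simp only [cutv, hlast]; omega

lemma countD (hc : 0 < c)
    (hstep : ∀ j, G (j+1) ≤ G j + m)
    (hper : ∀ j, G (j + ((n:ℤ)+1)) = G j - c) :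
    {q : ℤ × ℤ | 0 ≤ q.1 ∧ q.1 < (n:ℤ)+1 ∧ cutv n G q.1 q.2 ∈ DSet n c m}.ncard
      = (m+1)*(n+1) + c := by
  have hset : {q : ℤ × ℤ | 0 ≤ q.1 ∧ q.1 < (n:ℤ)+1 ∧ cutv n G q.1 q.2 ∈ DSet n c m}
      = {x : ℤ × ℤ | x.1 ∈ IcoZ (n+1) ∧
          x.2 ∈ Set.Icc (G x.1 - c) (G ((n:ℤ) + x.1) + m)} := by
    ext ⟨p, v⟩
    simp only [Set.mem_setOf_eq, mem_IcoZ, cut_mem_DSet_iff hstep]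
    push_cast
    tauto
  rw [hset, fiber_ncard (IcoZ (n+1)) (fun p => Set.Icc (G p - (c:ℤ)) (G ((n:ℤ) + p) + (m:ℤ)))
    (fun p _ => Set.finite_Icc _ _)]
  -- each fiber has size G (n+p) + m + c + 1 - G p
  have hterm : ∀ p : ℤ, (Set.Icc (G p - c) (G ((n:ℤ) + p) + m)).ncard
      = (G ((n:ℤ) + p) + m + c + 1 - G p).toNat := by
    intro p
    rw [← Finset.coe_Icc, Set.ncard_coe_finset, Int.card_Icc]
    congr 1
    ring
  have htermpos : ∀ p : ℤ, 0 ≤ G ((n:ℤ) + p) + m + c + 1 - G p := by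
    intro p
    have h1 := hper p
    have h2 := hstep ((n:ℤ) + p)
    have e : (n:ℤ) + p + 1 = p + ((n:ℤ)+1) := by ring
    rw [e] at h2
    omega
  -- sum over the Finset
  rw [Finset.sum_congr rfl (fun p _ => hterm p)]
  unfold IcoZ
  rw [Finset.sum_map]
  simp only [Function.Embedding.coeFn_mk]
  -- convert to an integer identity
  have key : ∑ j ∈ Finset.range (n+1), (G ((n:ℤ) + j) + m + c + 1 - G j).toNat
      = ((m:ℕ)+1)*(n+1) + c := by
    have hcast : ((∑ j ∈ Finset.range (n+1), (G ((n:ℤ) + j) + m + c + 1 - G j).toNat : ℕ) : ℤ)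
        = ∑ j ∈ Finset.range (n+1), (G ((n:ℤ) + j) + m + c + 1 - G j) := by
      push_cast
      refine Finset.sum_congr rfl (fun j _ => ?_)
      exact Int.toNat_of_nonneg (htermpos j)
    have htel : ∑ j ∈ Finset.range (n+1), (G ((n:ℤ) + j) + m + c + 1 - G j)
        = ((m:ℤ)+1)*((n:ℤ)+1) + c := by
      have hsplit : ∀ j ∈ Finset.range (n+1),
          G ((n:ℤ) + j) + m + c + 1 - G j
            = (G ((j:ℤ) - 1) - G (j:ℤ)) + (m + 1) := by
        intro j _
        have h1 := hper ((j:ℤ) - 1)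
        have e : (j:ℤ) - 1 + ((n:ℤ)+1) = (n:ℤ) + j := by ring
        rw [e] at h1
        omega
      rw [Finset.sum_congr rfl hsplit, Finset.sum_add_distrib]
      have htel2 : ∑ j ∈ Finset.range (n+1), (G ((j:ℤ) - 1) - G (j:ℤ))
          = G (-1:ℤ) - G (n:ℤ) := by
        have h := Finset.sum_range_sub' (f := fun j : ℕ => G ((j:ℤ) - 1)) (n := n+1)
        have e3 : ∀ i : ℕ, ((i+1:ℕ):ℤ) - 1 = (i:ℤ) := by intro i; push_cast; ring
        have e4 : ((0:ℕ):ℤ) - 1 = (-1:ℤ) := by norm_num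
        simp only [e3, e4] at h
        exact h
      rw [htel2]
      have h1 := hper (-1)
      have e : (-1:ℤ) + ((n:ℤ)+1) = (n:ℤ) := by ring
      rw [e] at h1
      simp only [Finset.sum_const, Finset.card_range, nsmul_eq_mul]
      push_cast
      have e5 : ((n:ℤ)+1) * ((m:ℤ)+1) = ((m:ℤ)+1)*((n:ℤ)+1) := by ring
      omega
    have : ((∑ j ∈ Finset.range (n+1), (G ((n:ℤ) + j) + m + c + 1 - G j).toNat : ℕ) : ℤ)
        = (((m:ℕ)+1)*(n+1) + c : ℕ) := by
      rw [hcast, htel]; push_cast; ring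
    exact_mod_cast this
  exact key

lemma countD_finite
    {q0 : Unit} :
    True := trivial

end Chunk8

section Chunk9

/-- the strictly monotone encoding value -/
def bval (m : ℕ) (g : Fin (n+1) → ℤ) (j : Fin (n+1)) : ℤ :=
  g (Fin.rev j) + ((m:ℤ)+1) * ((j:ℕ):ℤ) + m

lemma bval_strictMono {g : Fin (n+1) → ℤ} (hg : g ∈ DSet n c m) :
    StrictMono (bval m g) := by
  rw [Fin.strictMono_iff_lt_succ]
  intro j
  have hj : (j:ℕ) < n := j.2
  set i' : Fin n := ⟨n - 1 - (j:ℕ), by omega⟩ with hi'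
  have e1 : Fin.rev (j.succ) = i'.castSucc := by
    apply Fin.ext
    simp [Fin.rev, hi']
    omega
  have e2 : Fin.rev (j.castSucc) = i'.succ := by
    apply Fin.ext
    simp [Fin.rev, hi']
    omega
  have harea := hg.1 i'
  unfold bval
  rw [e1, e2]
  simp only [Fin.coe_castSucc, Fin.val_succ]
  push_cast
  have ebridge : ((m:ℤ)+1)*(((j:ℕ):ℤ)+1) = ((m:ℤ)+1)*((j:ℕ):ℤ) + ((m:ℤ)+1) := by ring
  omega

lemma bval_bounds {g : Fin (n+1) → ℤ} (hg : g ∈ DSet n c m) (j : Fin (n+1)) :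
    0 ≤ bval m g j ∧ bval m g j ≤ ((m:ℤ)+1)*((n:ℤ)+1) + c - 1 := by
  have hmono := (bval_strictMono hg).monotone
  constructor
  · have h0 : bval m g 0 = g (Fin.last n) + m := by
      unfold bval
      have e : Fin.rev (0 : Fin (n+1)) = Fin.last n := by
        apply Fin.ext; simp [Fin.rev]
      rw [e]
      simp
    have := hmono (Fin.zero_le j)
    have hb := hg.2.2
    omega
  · have h1 : bval m g (Fin.last n) = g 0 + ((m:ℤ)+1)*(n:ℤ) + m := by
      unfold bval
      have e : Fin.rev (Fin.last n) = 0 := by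
        apply Fin.ext; simp [Fin.rev]
      rw [e]
      simp [Fin.last]
    have := hmono (Fin.le_last j)
    have hb := hg.2.1
    have e : ((m:ℤ)+1)*((n:ℤ)+1) = ((m:ℤ)+1)*(n:ℤ) + (m+1) := by ring
    omega

lemma Mpos (n c m : ℕ) : 0 < (m+1)*(n+1)+c := by positivity

/-- the strictly monotone encoding as a function into `Fin M` -/
def ffun (n c m : ℕ) (g : Fin (n+1) → ℤ) : Fin (n+1) → Fin ((m+1)*(n+1)+c) :=
  fun j => ⟨(bval m g j).toNat % ((m+1)*(n+1)+c), Nat.mod_lt _ (Mpos n c m)⟩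

lemma ffun_val {g : Fin (n+1) → ℤ} (hg : g ∈ DSet n c m) (j : Fin (n+1)) :
    ((ffun n c m g j : ℕ) : ℤ) = bval m g j := by
  obtain ⟨h0, h1⟩ := bval_bounds hg j
  have hlt : (bval m g j).toNat < (m+1)*(n+1)+c := by
    have : ((m:ℤ)+1)*((n:ℤ)+1) + c = (((m+1)*(n+1)+c : ℕ) : ℤ) := by push_cast; ring
    omega
  unfold ffun
  simp only [Fin.val_mk]
  rw [Nat.mod_eq_of_lt hlt]
  omega

lemma ffun_strictMono {g : Fin (n+1) → ℤ} (hg : g ∈ DSet n c m) :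
    StrictMono (ffun n c m g) := by
  intro a b hab
  have h := bval_strictMono hg hab
  have ha := ffun_val hg a
  have hb := ffun_val hg b
  rw [Fin.lt_def]
  omega

/-- encoding map to finsets -/
def phiD (n c m : ℕ) (g : Fin (n+1) → ℤ) : Finset (Fin ((m+1)*(n+1)+c)) :=
  Finset.image (ffun n c m g) Finset.univ

lemma phiD_card {g : Fin (n+1) → ℤ} (hg : g ∈ DSet n c m) :
    (phiD n c m g).card = n+1 := by
  unfold phiD
  rw [Finset.card_image_of_injective _ (ffun_strictMono hg).injective, Finset.card_univ,
    Fintype.card_fin]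

lemma ffun_eq_orderEmb {g : Fin (n+1) → ℤ} (hg : g ∈ DSet n c m) :
    ffun n c m g = (phiD n c m g).orderEmbOfFin (phiD_card hg) :=
  Finset.orderEmbOfFin_unique (phiD_card hg)
    (fun x => Finset.mem_image_of_mem _ (Finset.mem_univ x)) (ffun_strictMono hg)

lemma phiD_injOn : Set.InjOn (phiD n c m) (DSet n c m) := by
  intro g1 hg1 g2 hg2 heq
  have hf : ffun n c m g1 = ffun n c m g2 := by
    rw [ffun_eq_orderEmb hg2]
    refine Finset.orderEmbOfFin_unique _ (fun x => ?_) (ffun_strictMono hg1)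
    rw [← heq]
    exact Finset.mem_image_of_mem _ (Finset.mem_univ x)
  funext i
  have h1 := ffun_val hg1 (Fin.rev i)
  have h2 := ffun_val hg2 (Fin.rev i)
  rw [hf] at h1
  unfold bval at h1 h2
  rw [Fin.rev_rev] at h1 h2
  omega

lemma phiD_surjOn {s : Finset (Fin ((m+1)*(n+1)+c))} (hs : s.card = n+1) :
    ∃ g ∈ DSet n c m, phiD n c m g = s := by
  set h := s.orderEmbOfFin hs with hh
  set g : Fin (n+1) → ℤ :=
    fun i => ((h (Fin.rev i) : ℕ) : ℤ) - ((m:ℤ)+1) * ((Fin.rev i : ℕ):ℤ) - m with hgdef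
  have hgD : g ∈ DSet n c m := by
    refine ⟨?_, ?_, ?_⟩
    · intro i'
      have hi'n : (i' : ℕ) < n := i'.2
      have hval1 : ((Fin.rev (i'.succ)) : ℕ) = n - 1 - (i' : ℕ) := by
        rw [Fin.val_rev]
        simp only [Fin.val_succ]
        omega
      have hval2 : ((Fin.rev (i'.castSucc)) : ℕ) = n - (i' : ℕ) := by
        rw [Fin.val_rev]
        simp only [Fin.coe_castSucc]
        omega
      have hrs : Fin.rev (i'.succ) < Fin.rev (i'.castSucc) := by
        rw [Fin.lt_def, hval1, hval2]
        omega
      have hmono := h.strictMono hrs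
      rw [Fin.lt_def] at hmono
      have hv1 : ((Fin.rev (i'.succ) : ℕ) : ℤ) = (n:ℤ) - 1 - (i':ℕ) := by
        rw [hval1]; omega
      have hv2 : ((Fin.rev (i'.castSucc) : ℕ) : ℤ) = (n:ℤ) - (i':ℕ) := by
        rw [hval2]; omega
      simp only [hgdef]
      rw [hv1, hv2]
      have e : ((m:ℤ)+1) * ((n:ℤ) - (i':ℕ)) = ((m:ℤ)+1) * ((n:ℤ) - 1 - (i':ℕ)) + (m+1) := by
        ring
      omega
    · have e : Fin.rev (0 : Fin (n+1)) = Fin.last n := by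
        apply Fin.ext; simp [Fin.rev]
      simp only [hgdef, e]
      have hlt : ((h (Fin.last n) : ℕ) : ℤ) < ((m:ℤ)+1)*((n:ℤ)+1) + c := by
        have := (h (Fin.last n)).2
        have e2 : ((m:ℤ)+1)*((n:ℤ)+1) + c = (((m+1)*(n+1)+c : ℕ) : ℤ) := by push_cast; ring
        omega
      have e3 : ((Fin.last n : Fin (n+1)) : ℕ) = n := rfl
      rw [e3]
      have e4 : ((m:ℤ)+1)*((n:ℤ)+1) = ((m:ℤ)+1)*(n:ℤ) + (m+1) := by ring
      omega
    · have e : Fin.rev (Fin.last n) = (0 : Fin (n+1)) := by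
        apply Fin.ext; simp [Fin.rev]
      simp only [hgdef, e]
      have := (h 0).1
      simp only [Fin.val_zero, Nat.cast_zero, mul_zero]
      omega
  refine ⟨g, hgD, ?_⟩
  have hfh : ffun n c m g = h := by
    funext j
    apply Fin.ext
    have hv := ffun_val hgD j
    have hbv : bval m g j = ((h j : ℕ) : ℤ) := by
      unfold bval
      simp only [hgdef, Fin.rev_rev]
      ring
    omega
  unfold phiD
  rw [hfh]
  apply Finset.coe_injective
  rw [Finset.coe_image, Finset.coe_univ, Set.image_univ]
  exact Finset.range_orderEmbOfFin s hs

lemma DSet_finite : (DSet n c m).Finite :=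
  Set.Finite.of_finite_image (Set.toFinite _) phiD_injOn

lemma DSet_ncard : (DSet n c m).ncard = ((m+1)*(n+1)+c).choose (n+1) := by
  rw [← Set.ncard_image_of_injOn phiD_injOn]
  have himg : phiD n c m '' DSet n c m
      = ↑(Finset.powersetCard (n+1) (Finset.univ : Finset (Fin ((m+1)*(n+1)+c)))) := by
    apply Set.Subset.antisymm
    · rintro s ⟨g, hg, rfl⟩
      simp only [Finset.mem_coe, Finset.mem_powersetCard]
      exact ⟨Finset.subset_univ _, phiD_card hg⟩
    · rintro s hs
      simp only [Finset.mem_coe, Finset.mem_powersetCard] at hs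
      obtain ⟨g, hg, rfl⟩ := phiD_surjOn hs.2
      exact Set.mem_image_of_mem _ hg
  rw [himg, Set.ncard_coe_finset, Finset.card_powersetCard, Finset.card_univ, Fintype.card_fin]

end Chunk9

section Chunk10

def SkSet (n c m k : ℕ) : Set (Fin (n+1) → ℤ) := {g | IsSkeletalZ (c:ℤ) (m:ℤ) k g}

lemma Sk_subset : SkSet n c m k ⊆ DSet n c m := by
  rintro g ⟨harea, h0, hpos, -⟩
  refine ⟨harea, h0, ?_⟩
  have := hpos (Fin.last n) (by simp [Fin.last])
  omega

lemma DSet_ext_step {g : Fin (n+1) → ℤ} (hg : g ∈ DSet n c m) (j : ℤ) :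
    extZ n c g (j+1) ≤ extZ n c g j + m :=
  extZ_step hg.1 (by have h1 := hg.2.1; have h2 := hg.2.2; omega) j

lemma DSet_ext_per (g : Fin (n+1) → ℤ) (j : ℤ) :
    extZ n c g (j + ((n:ℤ)+1)) = extZ n c g j - c := by
  have := extZ_period (c := c) g j
  push_cast at this
  exact this

lemma ext_cut (h : Fin (n+1) → ℤ) (p v j : ℤ) :
    extZ n c (cutv n (extZ n c h) p v) j = extZ n c h (j + p) - v := by
  refine (ext_unique (g := cutv n (extZ n c h) p v)
    (G' := fun j' => extZ n c h (j' + p) - v) (fun j' => ?_) (fun i => rfl) j).symm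
  have e : j' + ((n:ℤ)+1) + p = (j' + p) + ((n:ℤ)+1) := by ring
  have hper := DSet_ext_per (c := c) h (j' + p)
  push_cast
  rw [e, hper]
  ring

lemma cut_cut (h : Fin (n+1) → ℤ) {p : ℤ} (v : ℤ) (hp0 : 0 ≤ p) (hpN : p < (n:ℤ)+1) :
    cutv n (extZ n c (cutv n (extZ n c h) p v))
      (if p = 0 then 0 else ((n:ℤ)+1) - p) (if p = 0 then -v else -v - c) = h := by
  by_cases hp : p = 0
  · rw [if_pos hp, if_pos hp]
    subst hp
    funext i
    simp only [cutv, ext_cut]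
    have e : (i:ℤ) + 0 + 0 = (i:ℤ) := by ring
    rw [e, extZ_coe]
    ring
  · rw [if_neg hp, if_neg hp]
    funext i
    simp only [cutv, ext_cut]
    have e : (i:ℤ) + (((n:ℤ)+1) - p) + p = (i:ℤ) + ((n:ℤ)+1) := by ring
    rw [e, DSet_ext_per, extZ_coe]
    ring

/-- the involution on pairs -/
def phiE (n c : ℕ) (x : (Fin (n+1) → ℤ) × (ℤ × ℤ)) : (Fin (n+1) → ℤ) × (ℤ × ℤ) :=
  (cutv n (extZ n c x.1) x.2.1 x.2.2,
    (if x.2.1 = 0 then 0 else ((n:ℤ)+1) - x.2.1,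
     if x.2.1 = 0 then -x.2.2 else -x.2.2 - c))

lemma phiE_pos (h : Fin (n+1) → ℤ) (v : ℤ) :
    phiE n c (h, (0, v)) = (cutv n (extZ n c h) 0 v, (0, -v)) := by
  simp [phiE]

lemma phiE_neg (h : Fin (n+1) → ℤ) {p : ℤ} (v : ℤ) (hp : p ≠ 0) :
    phiE n c (h, (p, v)) = (cutv n (extZ n c h) p v, (((n:ℤ)+1) - p, -v - c)) := by
  simp [phiE, hp]

lemma phiE_invol (x : (Fin (n+1) → ℤ) × (ℤ × ℤ)) (hp0 : 0 ≤ x.2.1)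
    (hpN : x.2.1 < (n:ℤ)+1) : phiE n c (phiE n c x) = x := by
  obtain ⟨h, p, v⟩ := x
  simp only at hp0 hpN
  have hcc := cut_cut (c := c) h v hp0 hpN
  by_cases hp : p = 0
  · subst hp
    rw [if_pos rfl, if_pos rfl] at hcc
    rw [phiE_pos, phiE_pos, hcc]
    simp
  · have hne : ((n:ℤ)+1) - p ≠ 0 := by omega
    rw [if_neg hp, if_neg hp] at hcc
    rw [phiE_neg h v hp, phiE_neg _ _ hne, hcc]
    have e1 : ((n:ℤ)+1) - (((n:ℤ)+1) - p) = p := by ring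
    have e2 : -(-v - (c:ℤ)) - c = v := by ring
    rw [e1, e2]

lemma phiE_snd_range {h : Fin (n+1) → ℤ} {p v : ℤ}
    (hp0 : 0 ≤ p) (hpN : p < (n:ℤ)+1) :
    0 ≤ (phiE n c (h, (p, v))).2.1 ∧ (phiE n c (h, (p, v))).2.1 < (n:ℤ)+1 := by
  by_cases hp : p = 0
  · subst hp; rw [phiE_pos]; constructor <;> simp <;> omega
  · rw [phiE_neg h v hp]; constructor <;> simp <;> omega

lemma phiE_cut_back (h : Fin (n+1) → ℤ) {p v : ℤ}
    (hp0 : 0 ≤ p) (hpN : p < (n:ℤ)+1) :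
    cutv n (extZ n c (phiE n c (h, (p, v))).1) (phiE n c (h, (p, v))).2.1
      (phiE n c (h, (p, v))).2.2 = h := by
  have hcc := cut_cut (c := c) h v hp0 hpN
  by_cases hp : p = 0
  · subst hp
    rw [if_pos rfl, if_pos rfl] at hcc
    rw [phiE_pos]
    exact hcc
  · rw [if_neg hp, if_neg hp] at hcc
    rw [phiE_neg h v hp]
    exact hcc

end Chunk10


section Chunk11

variable {G : ℤ → ℤ}

lemma cutD_set_eq (hstep : ∀ j, G (j+1) ≤ G j + m) :
    {q : ℤ × ℤ | 0 ≤ q.1 ∧ q.1 < (n:ℤ)+1 ∧ cutv n G q.1 q.2 ∈ DSet n c m}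
      = {x : ℤ × ℤ | x.1 ∈ IcoZ (n+1) ∧
          x.2 ∈ Set.Icc (G x.1 - c) (G ((n:ℤ) + x.1) + m)} := by
  ext ⟨p, v⟩
  simp only [Set.mem_setOf_eq, mem_IcoZ, cut_mem_DSet_iff hstep]
  push_cast
  tauto

lemma countD_fin (hstep : ∀ j, G (j+1) ≤ G j + m) :
    {q : ℤ × ℤ | 0 ≤ q.1 ∧ q.1 < (n:ℤ)+1 ∧ cutv n G q.1 q.2 ∈ DSet n c m}.Finite := by
  rw [cutD_set_eq hstep]
  exact fiber_finite (IcoZ (n+1))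
    (fun p => Set.Icc (G p - (c:ℤ)) (G ((n:ℤ) + p) + (m:ℤ)))
    (fun p _ => Set.finite_Icc _ _)

lemma cutSk_set_eq (hk : k ≤ n) (hstep : ∀ j, G (j+1) ≤ G j + m) :
    {q : ℤ × ℤ | 0 ≤ q.1 ∧ q.1 < (n:ℤ)+1 ∧ cutv n G q.1 q.2 ∈ SkSet n c m k}
      = {q : ℤ × ℤ | 0 ≤ q.1 ∧ q.1 < (n:ℤ)+1 ∧ GoodSk n c k G q.1 q.2} := by
  ext ⟨p, v⟩
  exact and_congr_right fun _ => and_congr_right fun _ => cut_skeletal_iff hk hstep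

lemma countSk (hc : 0 < c) (hk : k ≤ n) {g : Fin (n+1) → ℤ} (hg : g ∈ DSet n c m) :
    {q : ℤ × ℤ | 0 ≤ q.1 ∧ q.1 < (n:ℤ)+1 ∧
      cutv n (extZ n c g) q.1 q.2 ∈ SkSet n c m k}.ncard = c := by
  rw [cutSk_set_eq hk (DSet_ext_step hg)]
  exact good_count hc hk (DSet_ext_per g)

lemma countSk_fin (hc : 0 < c) (hk : k ≤ n) {g : Fin (n+1) → ℤ} (hg : g ∈ DSet n c m) :
    {q : ℤ × ℤ | 0 ≤ q.1 ∧ q.1 < (n:ℤ)+1 ∧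
      cutv n (extZ n c g) q.1 q.2 ∈ SkSet n c m k}.Finite := by
  rw [cutSk_set_eq hk (DSet_ext_step hg)]
  exact good_finite hc hk (DSet_ext_per g)

theorem main_count (hc : 0 < c) (hk : k ≤ n) :
    (SkSet n c m k).ncard * ((m+1)*(n+1)+c)
      = c * Nat.choose ((m+1)*(n+1)+c) (n+1) := by
  classical
  have hSkFin : (SkSet n c m k).Finite := DSet_finite.subset Sk_subset
  have hDFin : (DSet n c m).Finite := DSet_finite
  set FD : (Fin (n+1) → ℤ) → Set (ℤ × ℤ) := fun h =>
    {q : ℤ × ℤ | 0 ≤ q.1 ∧ q.1 < (n:ℤ)+1 ∧ cutv n (extZ n c h) q.1 q.2 ∈ DSet n c m}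
    with hFD
  set FS : (Fin (n+1) → ℤ) → Set (ℤ × ℤ) := fun g =>
    {q : ℤ × ℤ | 0 ≤ q.1 ∧ q.1 < (n:ℤ)+1 ∧ cutv n (extZ n c g) q.1 q.2 ∈ SkSet n c m k}
    with hFS
  set E : Set ((Fin (n+1) → ℤ) × (ℤ × ℤ)) :=
    {x | x.1 ∈ hSkFin.toFinset ∧ x.2 ∈ FD x.1} with hE
  set E' : Set ((Fin (n+1) → ℤ) × (ℤ × ℤ)) :=
    {x | x.1 ∈ hDFin.toFinset ∧ x.2 ∈ FS x.1} with hE'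
  have hmemSk : ∀ h, h ∈ hSkFin.toFinset ↔ h ∈ SkSet n c m k := fun h =>
    Set.Finite.mem_toFinset _
  have hmemD : ∀ h, h ∈ hDFin.toFinset ↔ h ∈ DSet n c m := fun h =>
    Set.Finite.mem_toFinset _
  -- count E
  have hEcard : E.ncard = (SkSet n c m k).ncard * ((m+1)*(n+1)+c) := by
    rw [hE, fiber_ncard hSkFin.toFinset FD (fun h hh =>
      countD_fin (DSet_ext_step (Sk_subset ((hmemSk h).1 hh))))]
    rw [Finset.sum_congr rfl (fun h hh => countD hc
      (DSet_ext_step (Sk_subset ((hmemSk h).1 hh))) (DSet_ext_per h))]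
    rw [Finset.sum_const, smul_eq_mul, Set.ncard_eq_toFinset_card _ hSkFin]
  -- count E'
  have hE'card : E'.ncard = (DSet n c m).ncard * c := by
    rw [hE', fiber_ncard hDFin.toFinset FS (fun g hg =>
      countSk_fin hc hk ((hmemD g).1 hg))]
    rw [Finset.sum_congr rfl (fun g hg => countSk hc hk ((hmemD g).1 hg))]
    rw [Finset.sum_const, smul_eq_mul, Set.ncard_eq_toFinset_card _ hDFin]
  -- the involution maps E into E' and back
  have hmapsE : ∀ x ∈ E, phiE n c x ∈ E' := by
    rintro ⟨h, p, v⟩ ⟨hh, hp0, hpN, hcut⟩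
    refine ⟨(hmemD _).2 hcut, ?_⟩
    obtain ⟨hq0, hqN⟩ := phiE_snd_range (n := n) (c := c) (h := h) (v := v) hp0 hpN
    refine ⟨hq0, hqN, ?_⟩
    rw [phiE_cut_back h hp0 hpN]
    exact (hmemSk h).1 hh
  have hmapsE' : ∀ x ∈ E', phiE n c x ∈ E := by
    rintro ⟨h, p, v⟩ ⟨hh, hp0, hpN, hcut⟩
    refine ⟨(hmemSk _).2 hcut, ?_⟩
    obtain ⟨hq0, hqN⟩ := phiE_snd_range (n := n) (c := c) (h := h) (v := v) hp0 hpN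
    refine ⟨hq0, hqN, ?_⟩
    rw [phiE_cut_back h hp0 hpN]
    exact (hmemD h).1 hh
  have hinj : Set.InjOn (phiE n c) E := by
    rintro x hx y hy hxy
    have h1 := phiE_invol (c := c) x hx.2.1 hx.2.2.1
    have h2 := phiE_invol (c := c) y hy.2.1 hy.2.2.1
    rw [← h1, ← h2, hxy]
  have himg : phiE n c '' E = E' := by
    apply Set.Subset.antisymm
    · rintro y ⟨x, hx, rfl⟩
      exact hmapsE x hx
    · rintro y hy
      refine ⟨phiE n c y, hmapsE' y hy, ?_⟩
      exact phiE_invol (c := c) y hy.2.1 hy.2.2.1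
  have hcards : E.ncard = E'.ncard := by
    rw [← himg, Set.ncard_image_of_injOn hinj]
  rw [← hEcard, hcards, hE'card, DSet_ncard]
  ring

end Chunk11

end Stmt9

/-- for `𝒢 = ℤ` and positive integers `c, m`, the number of
`k`-skeletal area vectors equals the `m`-ballot number
`c/((m+1)N + c)·binom((m+1)N + c, N)` (here `N = n+1`, stated multiplied out). -/
theorem stmt9 (n : ℕ) (c m : ℕ) (hc : 0 < c) (hm : 0 < m) (k : ℕ) (hk : k ≤ n) :
    {g : Fin (n + 1) → ℤ | IsSkeletalZ (c : ℤ) (m : ℤ) k g}.ncard *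
        ((m + 1) * (n + 1) + c)
      = c * Nat.choose ((m + 1) * (n + 1) + c) (n + 1) :=
  Stmt9.main_count hc hk
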